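/- arXiv:2302.06252 — 2 statements merged into one kernel-verified Lean document; each statement's English description precedes it below -/
import Mathlib

section
/- For every alphabet Σ, every cost function δ : Σ × Σ → ℝ≥0, all nonempty strings S, T over Σ and all letters s, t ∈ Σ, the Dynamic Time Warping distance satisfies the recurrence DTW(S ++ [s], T ++ [t]) = δ(s,t) + min( DTW(S, T ++ [t]), DTW(S ++ [s], T), DTW(S, T) ). -/
/-- `S'` is a time-warp of `S`: each letter of `S` is replaced by a positive
number of consecutive copies of itself. -/
def IsTimeWarp {α : Type*} (S S' : List α) : Prop :=
  ∃ ℓ : List ℕ, ℓ.length = S.length ∧ (∀ x ∈ ℓ, 0 < x) ∧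
    S' = (List.zipWith List.replicate ℓ S).flatten

/-- The Dynamic Time Warping distance of `S` and `T` with respect to the cost
function `δ`: the infimum over all equal-length pairs of time-warps `S'`, `T'`
of the sum of letterwise costs. -/
noncomputable def DTW {α : Type*} (δ : α → α → NNReal) (S T : List α) : ENNReal :=
  ⨅ p ∈ {q : List α × List α |
      IsTimeWarp S q.1 ∧ IsTimeWarp T q.2 ∧ q.1.length = q.2.length},
    ((List.zipWith δ p.1 p.2).sum : ENNReal)

lemma isTimeWarp_concat_iff {α : Type*} {S : List α} {s : α} {U : List α} :
    IsTimeWarp (S ++ [s]) U ↔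
      ∃ V k, IsTimeWarp S V ∧ U = V ++ List.replicate (k + 1) s := by
  constructor
  · rintro ⟨ℓ, hlen, hpos, rfl⟩
    rcases List.eq_nil_or_concat ℓ with rfl | ⟨ℓ₀, k, rfl⟩
    · simp at hlen
    · simp only [List.concat_eq_append] at hpos ⊢
      simp only [List.concat_eq_append, List.length_append, List.length_singleton] at hlen
      have hlen0 : ℓ₀.length = S.length := by omega
      have hk : 0 < k := hpos k (by simp)
      refine ⟨(List.zipWith List.replicate ℓ₀ S).flatten, k - 1,
        ⟨ℓ₀, hlen0, fun x hx => hpos x (by simp [hx]), rfl⟩, ?_⟩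
      rw [List.zipWith_append hlen0]
      simp only [List.flatten_append]
      simp [Nat.sub_add_cancel hk]
  · rintro ⟨V, k, ⟨ℓ₀, hlen0, hpos0, rfl⟩, rfl⟩
    refine ⟨ℓ₀ ++ [k + 1], by simp [hlen0], ?_, ?_⟩
    · intro x hx
      rcases List.mem_append.1 hx with h | h
      · exact hpos0 x h
      · simp at h; omega
    · rw [List.zipWith_append hlen0]
      simp only [List.flatten_append]
      simp

lemma isTimeWarp_snoc {α : Type*} {S : List α} {s : α} {U : List α}
    (h : IsTimeWarp (S ++ [s]) U) : IsTimeWarp (S ++ [s]) (U ++ [s]) := by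
  rw [isTimeWarp_concat_iff] at h ⊢
  obtain ⟨V, k, hV, rfl⟩ := h
  exact ⟨V, k + 1, hV, by rw [List.append_assoc, ← List.replicate_succ']⟩

lemma DTW_le {α : Type*} (δ : α → α → NNReal) {S T a b : List α}
    (h1 : IsTimeWarp S a) (h2 : IsTimeWarp T b) (h3 : a.length = b.length) :
    DTW δ S T ≤ ((List.zipWith δ a b).sum : ENNReal) :=
  iInf₂_le (a, b) ⟨h1, h2, h3⟩

lemma sum_zipWith_concat {α : Type*} (δ : α → α → NNReal) {a b : List α}
    (h : a.length = b.length) (x y : α) :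
    ((List.zipWith δ (a ++ [x]) (b ++ [y])).sum : ENNReal)
      = (δ x y : ENNReal) + ((List.zipWith δ a b).sum : ENNReal) := by
  rw [List.zipWith_append h]
  simp [List.sum_append, add_comm]

lemma le_add_DTW {α : Type*} (δ : α → α → NNReal) {S T A B : List α} {s t : α}
    (hext : ∀ a b : List α, IsTimeWarp A a → IsTimeWarp B b →
      IsTimeWarp (S ++ [s]) (a ++ [s]) ∧ IsTimeWarp (T ++ [t]) (b ++ [t])) :
    DTW δ (S ++ [s]) (T ++ [t]) ≤ (δ s t : ENNReal) + DTW δ A B := by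
  conv_rhs => rw [DTW]
  rw [ENNReal.add_iInf]
  refine le_iInf fun p => ?_
  rw [ENNReal.add_iInf]
  refine le_iInf fun hp => ?_
  obtain ⟨hp1, hp2, hp3⟩ := hp
  obtain ⟨h1, h2⟩ := hext p.1 p.2 hp1 hp2
  calc DTW δ (S ++ [s]) (T ++ [t])
      ≤ ((List.zipWith δ (p.1 ++ [s]) (p.2 ++ [t])).sum : ENNReal) :=
        DTW_le δ h1 h2 (by simp [hp3])
    _ = _ := sum_zipWith_concat δ hp3 s t

lemma DTW_concat_le {α : Type*} (δ : α → α → NNReal) (S T : List α) (s t : α) :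
    DTW δ (S ++ [s]) (T ++ [t]) ≤
      (δ s t : ENNReal) +
        min (min (DTW δ S (T ++ [t])) (DTW δ (S ++ [s]) T)) (DTW δ S T) := by
  have h1 : DTW δ (S ++ [s]) (T ++ [t]) ≤ (δ s t : ENNReal) + DTW δ S (T ++ [t]) :=
    le_add_DTW δ fun a b ha hb =>
      ⟨isTimeWarp_concat_iff.2 ⟨a, 0, ha, by simp⟩, isTimeWarp_snoc hb⟩
  have h2 : DTW δ (S ++ [s]) (T ++ [t]) ≤ (δ s t : ENNReal) + DTW δ (S ++ [s]) T :=
    le_add_DTW δ fun a b ha hb =>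
      ⟨isTimeWarp_snoc ha, isTimeWarp_concat_iff.2 ⟨b, 0, hb, by simp⟩⟩
  have h3 : DTW δ (S ++ [s]) (T ++ [t]) ≤ (δ s t : ENNReal) + DTW δ S T :=
    le_add_DTW δ fun a b ha hb =>
      ⟨isTimeWarp_concat_iff.2 ⟨a, 0, ha, by simp⟩,
       isTimeWarp_concat_iff.2 ⟨b, 0, hb, by simp⟩⟩
  rcases min_cases (min (DTW δ S (T ++ [t])) (DTW δ (S ++ [s]) T)) (DTW δ S T) with
    ⟨h, -⟩ | ⟨h, -⟩
  · rw [h]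
    rcases min_cases (DTW δ S (T ++ [t])) (DTW δ (S ++ [s]) T) with ⟨h', -⟩ | ⟨h', -⟩ <;>
      rw [h']
    exacts [h1, h2]
  · rw [h]; exact h3

lemma key {α : Type*} (δ : α → α → NNReal) (S T : List α) (s t : α) :
    ∀ n : ℕ, ∀ S' T' : List α, S'.length = n →
      IsTimeWarp (S ++ [s]) S' → IsTimeWarp (T ++ [t]) T' → S'.length = T'.length →
      (δ s t : ENNReal) +
          min (min (DTW δ S (T ++ [t])) (DTW δ (S ++ [s]) T)) (DTW δ S T) ≤
        ((List.zipWith δ S' T').sum : ENNReal) := by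
  intro n
  induction n using Nat.strong_induction_on with
  | _ n IH =>
    intro S' T' hn hS' hT' hlen
    obtain ⟨V, k, hV, rfl⟩ := isTimeWarp_concat_iff.1 hS'
    obtain ⟨W, m, hW, rfl⟩ := isTimeWarp_concat_iff.1 hT'
    have hrepS : V ++ List.replicate (k + 1) s = (V ++ List.replicate k s) ++ [s] := by
      rw [List.append_assoc, ← List.replicate_succ']
    have hrepT : W ++ List.replicate (m + 1) t = (W ++ List.replicate m t) ++ [t] := by
      rw [List.append_assoc, ← List.replicate_succ']
    set S₁ := V ++ List.replicate k s with hS₁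
    set T₁ := W ++ List.replicate m t with hT₁
    have hlen1 : S₁.length = T₁.length := by
      have := hlen
      rw [hrepS, hrepT] at this
      simpa using this
    rw [hrepS, hrepT, sum_zipWith_concat δ hlen1 s t]
    refine add_le_add (le_refl _) ?_
    rcases Nat.eq_zero_or_pos k with rfl | hk
    · rcases Nat.eq_zero_or_pos m with rfl | hm
      · -- both final runs have length 1
        refine le_trans (min_le_right _ _) ?_
        simp only [hS₁, hT₁, List.replicate_zero, List.append_nil]
        exact DTW_le δ hV hW (by simpa [hS₁, hT₁] using hlen1)
      · refine le_trans (min_le_left _ _) (le_trans (min_le_left _ _) ?_)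
        have hT1 : IsTimeWarp (T ++ [t]) T₁ :=
          isTimeWarp_concat_iff.2 ⟨W, m - 1, hW, by rw [hT₁, Nat.sub_add_cancel hm]⟩
        simp only [hS₁, List.replicate_zero, List.append_nil]
        exact DTW_le δ hV hT1 (by simpa [hS₁] using hlen1)
    · rcases Nat.eq_zero_or_pos m with rfl | hm
      · refine le_trans (min_le_left _ _) (le_trans (min_le_right _ _) ?_)
        have hS1 : IsTimeWarp (S ++ [s]) S₁ :=
          isTimeWarp_concat_iff.2 ⟨V, k - 1, hV, by rw [hS₁, Nat.sub_add_cancel hk]⟩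
        simp only [hT₁, List.replicate_zero, List.append_nil]
        exact DTW_le δ hS1 hW (by simpa [hT₁] using hlen1)
      · have hS1 : IsTimeWarp (S ++ [s]) S₁ :=
          isTimeWarp_concat_iff.2 ⟨V, k - 1, hV, by rw [hS₁, Nat.sub_add_cancel hk]⟩
        have hT1 : IsTimeWarp (T ++ [t]) T₁ :=
          isTimeWarp_concat_iff.2 ⟨W, m - 1, hW, by rw [hT₁, Nat.sub_add_cancel hm]⟩
        have hnn : S₁.length < n := by
          have : (V ++ List.replicate (k + 1) s).length = n := hn
          rw [hrepS] at this
          simp only [List.length_append, List.length_singleton] at this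
          omega
        have := IH S₁.length hnn S₁ T₁ rfl hS1 hT1 hlen1
        exact le_trans (le_add_of_nonneg_left (zero_le (a := _))) this

theorem dtw_recurrence {α : Type*} (δ : α → α → NNReal) (S T : List α)
    (hS : S ≠ []) (hT : T ≠ []) (s t : α) :
    DTW δ (S ++ [s]) (T ++ [t]) =
      (δ s t : ENNReal) +
        min (min (DTW δ S (T ++ [t])) (DTW δ (S ++ [s]) T)) (DTW δ S T) := by
  refine le_antisymm (DTW_concat_le δ S T s t) ?_
  refine le_iInf fun p => le_iInf fun hp => ?_
  obtain ⟨hp1, hp2, hp3⟩ := hp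
  exact key δ S T s t p.1.length p.1 p.2 rfl hp1 hp2 hp3
end

section
/- Let S, T be nonempty strings of lengths N and M over an alphabet Σ with cost function δ : Σ × Σ → ℝ≥0, and let w(i,j) = δ(S[i], T[j]) (1-based indexing) for 1 ≤ i ≤ N, 1 ≤ j ≤ M. Then DTW(S, T) = D(N, M), where D is defined by the alignment-grid recurrence D(0,0) = 0, D(i,0) = D(0,j) = ∞ for i,j ≥ 1, and D(i,j) = w(i,j) + min(D(i-1,j), D(i,j-1), D(i-1,j-1)). -/
open List

lemma warp_nil {α : Type*} {S' : List α} : IsTimeWarp [] S' ↔ S' = [] := by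
  constructor
  · rintro ⟨ℓ, hlen, -, rfl⟩; cases ℓ <;> simp_all
  · rintro rfl; exact ⟨[], by simp, by simp, by simp⟩

lemma warp_len_aux {α : Type*} : ∀ (ℓ : List ℕ) (S : List α), ℓ.length = S.length →
    (∀ x ∈ ℓ, 0 < x) → S.length ≤ ((List.zipWith List.replicate ℓ S).flatten).length := by
  intro ℓ
  induction ℓ with
  | nil => intro S h _; simp_all
  | cons k ℓ ih =>
    intro S h hpos
    cases S with
    | nil => simp at h
    | cons a S =>
      simp only [zipWith_cons_cons, flatten_cons, length_append, length_cons, length_replicate]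
      have h1 := ih S (by simpa using h) (fun x hx => hpos x (by simp [hx]))
      have : 0 < k := hpos k (by simp)
      omega

lemma warp_ne_nil {α : Type*} {S S' : List α} (h : IsTimeWarp S S') (hS : S ≠ []) : S' ≠ [] := by
  obtain ⟨ℓ, hlen, hpos, rfl⟩ := h
  have h2 := warp_len_aux ℓ S hlen hpos
  intro hcon
  rw [hcon] at h2
  simp at h2
  exact hS h2

lemma warp_append {α : Type*} {S S'' : List α} {a : α} {k : ℕ}
    (h : IsTimeWarp S S'') (hk : 0 < k) :
    IsTimeWarp (S ++ [a]) (S'' ++ List.replicate k a) := by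
  obtain ⟨ℓ, hlen, hpos, rfl⟩ := h
  refine ⟨ℓ ++ [k], by simp [hlen], ?_, ?_⟩
  · intro x hx
    rcases List.mem_append.mp hx with h | h
    · exact hpos x h
    · simp at h; omega
  · show _ = (List.zipWith List.replicate (ℓ ++ [k]) (S ++ [a])).flatten
    rw [List.zipWith_append hlen, List.flatten_append]
    simp

lemma warp_concat_decomp {α : Type*} {S : List α} {a : α} {S' : List α}
    (h : IsTimeWarp (S ++ [a]) S') :
    ∃ S'' k, 0 < k ∧ IsTimeWarp S S'' ∧ S' = S'' ++ List.replicate k a := by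
  obtain ⟨ℓ, hlen, hpos, rfl⟩ := h
  have hne : ℓ ≠ [] := by intro h; subst h; simp at hlen
  obtain ⟨ℓ₀, k, rfl⟩ : ∃ ℓ₀ k, ℓ = ℓ₀ ++ [k] :=
    ⟨ℓ.dropLast, ℓ.getLast hne, (List.dropLast_append_getLast hne).symm⟩
  have hlen0 : ℓ₀.length = S.length := by simp at hlen; omega
  refine ⟨(List.zipWith List.replicate ℓ₀ S).flatten, k, hpos k (by simp),
    ⟨ℓ₀, hlen0, fun x hx => hpos x (by simp [hx]), rfl⟩, ?_⟩
  show (List.zipWith List.replicate (ℓ₀ ++ [k]) (S ++ [a])).flatten = _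
  rw [List.zipWith_append hlen0, List.flatten_append]
  simp

lemma dtw_le {α : Type*} (δ : α → α → NNReal) {S T S' T' : List α}
    (h1 : IsTimeWarp S S') (h2 : IsTimeWarp T T') (h3 : S'.length = T'.length) :
    DTW δ S T ≤ ((List.zipWith δ S' T').sum : ENNReal) :=
  iInf₂_le (S', T') ⟨h1, h2, h3⟩

lemma dtw_nil_nil {α : Type*} (δ : α → α → NNReal) : DTW δ [] [] = 0 := by
  refine le_antisymm ?_ (zero_le)
  have := dtw_le δ (S' := ([] : List α)) (T' := ([] : List α))
    (warp_nil.mpr rfl) (warp_nil.mpr rfl) rfl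
  simpa using this

lemma dtw_nil_left {α : Type*} (δ : α → α → NNReal) {T : List α} (hT : T ≠ []) :
    DTW δ [] T = ⊤ := by
  refine le_antisymm le_top (le_iInf₂ fun p hp => ?_)
  exfalso
  obtain ⟨h1, h2, h3⟩ := hp
  have e1 := warp_nil.mp h1
  have e2 := warp_ne_nil h2 hT
  apply e2
  rw [← List.length_eq_zero_iff, ← h3, e1]
  simp

lemma dtw_nil_right {α : Type*} (δ : α → α → NNReal) {S : List α} (hS : S ≠ []) :
    DTW δ S [] = ⊤ := by
  refine le_antisymm le_top (le_iInf₂ fun p hp => ?_)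
  exfalso
  obtain ⟨h1, h2, h3⟩ := hp
  have e1 := warp_nil.mp h2
  have e2 := warp_ne_nil h1 hS
  apply e2
  rw [← List.length_eq_zero_iff, h3, e1]
  simp

lemma cost_concat {α : Type*} (δ : α → α → NNReal) {S₀ T₀ : List α} (a b : α)
    (h : S₀.length = T₀.length) :
    ((List.zipWith δ (S₀ ++ [a]) (T₀ ++ [b])).sum : ENNReal)
      = ((List.zipWith δ S₀ T₀).sum : ENNReal) + δ a b := by
  rw [List.zipWith_append h, List.sum_append]
  push_cast
  simp

lemma warp_concat_self {α : Type*} {T : List α} {b : α} {T' : List α}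
    (h : IsTimeWarp (T ++ [b]) T') : IsTimeWarp (T ++ [b]) (T' ++ [b]) := by
  obtain ⟨T'', l, hl, hw, rfl⟩ := warp_concat_decomp h
  have := warp_append (a := b) (k := l + 1) hw (Nat.succ_pos l)
  simpa [List.replicate_succ', List.append_assoc] using this

lemma warp_concat_one {α : Type*} {S : List α} {a : α} {S' : List α}
    (h : IsTimeWarp S S') : IsTimeWarp (S ++ [a]) (S' ++ [a]) := by
  simpa using warp_append (a := a) (k := 1) h one_pos

lemma dtw_rec {α : Type*} (δ : α → α → NNReal) (S T : List α) (a b : α) :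
    DTW δ (S ++ [a]) (T ++ [b]) =
      (δ a b : ENNReal) +
        min (min (DTW δ S (T ++ [b])) (DTW δ (S ++ [a]) T)) (DTW δ S T) := by
  refine le_antisymm ?_ ?_
  · -- ≤ direction
    have gen : ∀ U V : List α,
        (∀ S' T' : List α, IsTimeWarp U S' → IsTimeWarp V T' →
          IsTimeWarp (S ++ [a]) (S' ++ [a]) ∧ IsTimeWarp (T ++ [b]) (T' ++ [b])) →
        DTW δ (S ++ [a]) (T ++ [b]) ≤ (δ a b : ENNReal) + DTW δ U V := by
      intro U V h
      conv_rhs => rw [DTW]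
      rw [ENNReal.add_iInf]
      refine le_iInf fun p => ?_
      rw [ENNReal.add_iInf]
      refine le_iInf fun hp => ?_
      obtain ⟨hp1, hp2, hp3⟩ := hp
      obtain ⟨w1, w2⟩ := h p.1 p.2 hp1 hp2
      have hlen : (p.1 ++ [a]).length = (p.2 ++ [b]).length := by simp [hp3]
      have hle := dtw_le δ w1 w2 hlen
      rwa [cost_concat δ a b hp3, add_comm] at hle
    have h1 : DTW δ (S ++ [a]) (T ++ [b]) ≤ (δ a b : ENNReal) + DTW δ S (T ++ [b]) :=
      gen S (T ++ [b]) fun S' T' hS' hT' => ⟨warp_concat_one hS', warp_concat_self hT'⟩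
    have h2 : DTW δ (S ++ [a]) (T ++ [b]) ≤ (δ a b : ENNReal) + DTW δ (S ++ [a]) T :=
      gen (S ++ [a]) T fun S' T' hS' hT' => ⟨warp_concat_self hS', warp_concat_one hT'⟩
    have h3 : DTW δ (S ++ [a]) (T ++ [b]) ≤ (δ a b : ENNReal) + DTW δ S T :=
      gen S T fun S' T' hS' hT' => ⟨warp_concat_one hS', warp_concat_one hT'⟩
    rcases min_cases (min (DTW δ S (T ++ [b])) (DTW δ (S ++ [a]) T)) (DTW δ S T) with
      ⟨he, -⟩ | ⟨he, -⟩
    · rw [he]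
      rcases min_cases (DTW δ S (T ++ [b])) (DTW δ (S ++ [a]) T) with ⟨he2, -⟩ | ⟨he2, -⟩
      · rw [he2]; exact h1
      · rw [he2]; exact h2
    · rw [he]; exact h3
  · -- ≥ direction
    have key : ∀ (n : ℕ) (S' T' : List α), S'.length ≤ n →
        IsTimeWarp (S ++ [a]) S' → IsTimeWarp (T ++ [b]) T' → S'.length = T'.length →
        (δ a b : ENNReal) +
            min (min (DTW δ S (T ++ [b])) (DTW δ (S ++ [a]) T)) (DTW δ S T)
          ≤ ((List.zipWith δ S' T').sum : ENNReal) := by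
      intro n
      induction n with
      | zero =>
        intro S' T' hn hS' hT' _
        exact absurd (List.length_eq_zero_iff.mp (Nat.le_zero.mp hn))
          (warp_ne_nil hS' (by simp))
      | succ n ih =>
        intro S' T' hn hS' hT' hlen
        obtain ⟨S'', k, hk, hwS, rfl⟩ := warp_concat_decomp hS'
        obtain ⟨T'', l, hl, hwT, rfl⟩ := warp_concat_decomp hT'
        obtain ⟨k, rfl⟩ : ∃ k', k = k' + 1 := ⟨k - 1, by omega⟩
        obtain ⟨l, rfl⟩ : ∃ l', l = l' + 1 := ⟨l - 1, by omega⟩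
        have eS : S'' ++ List.replicate (k + 1) a
            = (S'' ++ List.replicate k a) ++ [a] := by
          rw [List.replicate_succ', ← List.append_assoc]
        have eT : T'' ++ List.replicate (l + 1) b
            = (T'' ++ List.replicate l b) ++ [b] := by
          rw [List.replicate_succ', ← List.append_assoc]
        have hlen0 : (S'' ++ List.replicate k a).length
            = (T'' ++ List.replicate l b).length := by
          rw [eS, eT] at hlen; simp at hlen ⊢; omega
        rw [eS, eT, cost_concat δ a b hlen0, add_comm]
        refine add_le_add_left ?_ _
        rcases Nat.eq_zero_or_pos k with rfl | hk0 <;>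
          rcases Nat.eq_zero_or_pos l with rfl | hl0
        · -- both singletons : pair for (S, T)
          refine (min_le_right _ _).trans ?_
          have := dtw_le δ hwS hwT (by simpa using hlen0)
          simpa using this
        · -- k = 0, l > 0 : pair for (S, T ++ [b])
          refine ((min_le_left _ _).trans (min_le_left _ _)).trans ?_
          have := dtw_le δ hwS (warp_append (a := b) hwT hl0) (by simpa using hlen0)
          simpa using this
        · -- k > 0, l = 0 : pair for (S ++ [a], T)
          refine ((min_le_left _ _).trans (min_le_right _ _)).trans ?_
          have := dtw_le δ (warp_append (a := a) hwS hk0) hwT (by simpa using hlen0)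
          simpa using this
        · -- both long : use induction hypothesis
          have hlt : (S'' ++ List.replicate k a).length ≤ n := by
            rw [eS] at hn; simp at hn ⊢; omega
          have := ih (S'' ++ List.replicate k a) (T'' ++ List.replicate l b) hlt
            (warp_append hwS hk0) (warp_append hwT hl0) hlen0
          exact le_add_self.trans this
    conv_rhs => rw [DTW]
    refine le_iInf fun p => le_iInf fun hp => ?_
    exact key p.1.length p.1 p.2 le_rfl hp.1 hp.2.1 hp.2.2

/-- The alignment-grid dynamic program: `gridD w i j` is the value `D(i,j)`
defined by `D(0,0) = 0`, `D(i,0) = D(0,j) = ∞` for `i,j ≥ 1`, and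
`D(i,j) = w(i,j) + min(D(i-1,j), D(i,j-1), D(i-1,j-1))`. -/
noncomputable def gridD (w : ℕ → ℕ → NNReal) : ℕ → ℕ → ENNReal
  | 0, 0 => 0
  | _ + 1, 0 => ⊤
  | 0, _ + 1 => ⊤
  | i + 1, j + 1 =>
      (w (i + 1) (j + 1) : ENNReal) +
        min (min (gridD w i (j + 1)) (gridD w (i + 1) j)) (gridD w i j)

theorem dtw_eq_gridD {α : Type*} (δ : α → α → NNReal) (S T : List α)
    (hS : S ≠ []) (hT : T ≠ []) (w : ℕ → ℕ → NNReal)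
    (hw : ∀ (i : Fin S.length) (j : Fin T.length),
      w ((i : ℕ) + 1) ((j : ℕ) + 1) = δ (S.get i) (T.get j)) :
    DTW δ S T = gridD w S.length T.length := by
  have aux : ∀ i j, i ≤ S.length → j ≤ T.length →
      DTW δ (S.take i) (T.take j) = gridD w i j := by
    intro i
    induction i with
    | zero =>
      intro j
      cases j with
      | zero => intro _ _; simpa [gridD] using dtw_nil_nil δ
      | succ j =>
        intro _ hj
        have : T.take (j + 1) ≠ [] := by
          refine List.ne_nil_of_length_pos ?_
          rw [List.length_take]
          have h0 : 0 < T.length := List.length_pos_iff.mpr hT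
          omega
        rw [List.take_zero, dtw_nil_left δ this]
        simp [gridD]
    | succ i ih =>
      intro j
      induction j with
      | zero =>
        intro hi _
        have : S.take (i + 1) ≠ [] := by
          refine List.ne_nil_of_length_pos ?_
          rw [List.length_take]
          have h0 : 0 < S.length := List.length_pos_iff.mpr hS
          omega
        rw [List.take_zero, dtw_nil_right δ this]
        simp [gridD]
      | succ j ihj =>
        intro hi hj
        have hi' : i < S.length := hi
        have hj' : j < T.length := hj
        have eS : S.take (i + 1) = S.take i ++ [S.get ⟨i, hi'⟩] :=
          by rw [List.get_eq_getElem]; exact (List.take_concat_get' S i hi').symm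
        have eT : T.take (j + 1) = T.take j ++ [T.get ⟨j, hj'⟩] :=
          by rw [List.get_eq_getElem]; exact (List.take_concat_get' T j hj').symm
        rw [eS, eT, dtw_rec, ← eS, ← eT,
          ih j (le_of_lt hi') (le_of_lt hj'),
          ih (j + 1) (le_of_lt hi') hj,
          ihj hi (le_of_lt hj'),
          ← hw ⟨i, hi'⟩ ⟨j, hj'⟩]
        simp [gridD]
  have := aux S.length T.length le_rfl le_rfl
  simpa using this
end
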